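/- If θ is a force tensor and f is a linear isometry of (ℝ⁴, η), then f·θ is again a force tensor; i.e., for each α the endomorphism (f·θ)_α commutes with γ_v for every v ∈ ℝ⁴ and satisfies ĝ((f·θ)_α ψ, φ) + ĝ(ψ, (f·θ)_α φ) = 0 for all ψ, φ. -/

import Mathlib

noncomputable section

open CliffordAlgebra

/-- Minkowski space ℝ⁴. -/
abbrev V4 : Type := Fin 4 → ℝ

/-- The Minkowski quadratic form η(x) = −x₀² + x₁² + x₂² + x₃². -/
def η : QuadraticForm ℝ V4 := QuadraticMap.weightedSumSquares ℝ ![(-1 : ℝ), 1, 1, 1]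

/-- The Clifford algebra Cl(η). -/
abbrev Cl : Type := CliffordAlgebra η

/-- Standard basis vectors e₀, e₁, e₂, e₃ of ℝ⁴. -/
def e (i : Fin 4) : V4 := Pi.single i 1

/-- The polar bilinear form B of η : B(v,w) = (η(v+w) − η(v) − η(w))/2. -/
def Bη (v w : V4) : ℝ := (η (v + w) - η v - η w) / 2

/-- γ_v : left multiplication by ι(v). -/
def γ (v : V4) : Module.End ℝ Cl := LinearMap.mulLeft ℝ (ι η v)

/-- R_c : right multiplication by c. -/
def Rc (c : Cl) : Module.End ℝ Cl := LinearMap.mulRight ℝ c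

/-- The basis element e_I = ι(e_{i₁})⋯ι(e_{i_k}) for I = {i₁ < ⋯ < i_k}. -/
def eI (I : Finset (Fin 4)) : Cl := ((I.sort (· ≤ ·)).map (fun i => ι η (e i))).prod

/-- Clifford conjugation: reversal composed with the grade involution. -/
def cconj : Cl →ₗ[ℝ] Cl := reverse ∘ₗ involute.toLinearMap

/-- The extended metric ĝ on Cl(η), relative to a coefficient functional π₀. -/
def ghat (π₀ : Cl →ₗ[ℝ] ℝ) (ψ φ : Cl) : ℝ := -(1/2 : ℝ) * π₀ (cconj ψ * φ + cconj φ * ψ)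

/-- A force tensor: a quadruple of endomorphisms of Cl(η), each commuting with all the
gamma matrices and anti-self-adjoint with respect to ĝ. -/
def IsForceTensor (π₀ : Cl →ₗ[ℝ] ℝ) (θ : Fin 4 → Module.End ℝ Cl) : Prop :=
  ∀ α : Fin 4, (∀ v : V4, θ α ∘ₗ γ v = γ v ∘ₗ θ α) ∧
    ∀ ψ φ : Cl, ghat π₀ (θ α ψ) φ + ghat π₀ ψ (θ α φ) = 0

/-- The algebra automorphism f̂ of Cl(η) induced by a linear isometry f of (ℝ⁴,η). -/
def hatAut (f : V4 ≃ₗ[ℝ] V4) (hf : ∀ v, η (f v) = η v) : Cl →ₐ[ℝ] Cl :=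
  CliffordAlgebra.lift η ⟨(ι η) ∘ₗ (f : V4 →ₗ[ℝ] V4), fun v => by
    simp only [LinearMap.comp_apply, LinearEquiv.coe_coe, ι_sq_scalar, hf]⟩

lemma isometry_symm (f : V4 ≃ₗ[ℝ] V4) (hf : ∀ v, η (f v) = η v) :
    ∀ v, η (f.symm v) = η v := fun v => by
  have h := hf (f.symm v)
  rw [f.apply_symm_apply] at h
  exact h.symm

/-- The action of a linear isometry f on a quadruple θ of endomorphisms of Cl(η):
(f·θ)_α = Σ_β c_{βα} • (f̂ ∘ θ_β ∘ f̂⁻¹), where f⁻¹(e_α) = Σ_β c_{βα} e_β. -/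
def act (f : V4 ≃ₗ[ℝ] V4) (hf : ∀ v, η (f v) = η v)
    (θ : Fin 4 → Module.End ℝ Cl) : Fin 4 → Module.End ℝ Cl :=
  fun α => ∑ β : Fin 4, f.symm (e α) β •
    ((hatAut f hf).toLinearMap ∘ₗ θ β ∘ₗ (hatAut f.symm (isometry_symm f hf)).toLinearMap)

lemma polar_e {i j : Fin 4} (h : i ≠ j) : QuadraticMap.polar η (e i) (e j) = 0 := by
  simp only [QuadraticMap.polar, η, e, QuadraticMap.weightedSumSquares_apply, Fin.sum_univ_four]
  fin_cases i <;> fin_cases j <;> simp_all [Pi.single_apply] <;> norm_num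

lemma eta_e (j : Fin 4) : η (e j) = ![(-1:ℝ),1,1,1] j := by
  simp only [η, e, QuadraticMap.weightedSumSquares_apply, Fin.sum_univ_four]
  fin_cases j <;> simp [Pi.single_apply] <;> norm_num

lemma eta_e_ne (j : Fin 4) : η (e j) ≠ 0 := by
  rw [eta_e]; fin_cases j <;> norm_num

lemma ι_e_anticomm {i j : Fin 4} (h : i ≠ j) :
    ι η (e j) * ι η (e i) = -(ι η (e i) * ι η (e j)) := by
  have := ι_mul_ι_add_swap (Q := η) (e j) (e i)
  rw [polar_e (Ne.symm h), map_zero] at this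
  exact eq_neg_of_add_eq_zero_left this

lemma prod_anticomm (j : Fin 4) (l : List (Fin 4)) :
    ι η (e j) * (l.map (fun i => ι η (e i))).prod =
      ((-1:ℝ)^(l.countP (fun i => i != j))) • ((l.map (fun i => ι η (e i))).prod * ι η (e j)) := by
  induction l with
  | nil => simp
  | cons i l ih =>
    simp only [List.map_cons, List.prod_cons, List.countP_cons]
    by_cases hij : i = j
    · subst hij
      simp only [bne_self_eq_false, if_neg, Bool.false_eq_true, if_false, add_zero]
      conv_lhs => rw [ih]
      rw [mul_smul_comm, ← mul_assoc]
    · have hb : (i != j) = true := by simpa using hij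
      rw [hb, if_pos rfl, ← mul_assoc, ι_e_anticomm hij, neg_mul, mul_assoc, ih,
        mul_smul_comm, pow_succ, mul_neg_one, neg_smul, mul_assoc]

lemma exists_odd' (I : Finset (Fin 4)) (h : I ≠ ∅) :
    ∃ j, (I.filter (fun i => i ≠ j)).card % 2 = 1 := by
  revert h; revert I; decide

lemma countP_sort (I : Finset (Fin 4)) (j : Fin 4) :
    (Finset.sort I (· ≤ ·)).countP (fun i => i != j) = (I.filter (fun i => i ≠ j)).card := by
  rw [List.Perm.countP_eq _ (Finset.sort_perm_toList (s := I) (r := (· ≤ ·)))]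
  have hp : (fun i : Fin 4 => i != j) = (fun i => decide (i ≠ j)) := by
    funext i; by_cases h : i = j <;> simp [h, bne]
  rw [hp, ← Multiset.coe_countP, Finset.toList, Multiset.coe_toList,
    Multiset.countP_eq_card_filter]
  rfl

lemma exists_odd (I : Finset (Fin 4)) (h : I ≠ ∅) :
    ∃ j, (Finset.sort I (· ≤ ·)).countP (fun i => i != j) % 2 = 1 := by
  obtain ⟨j, hj⟩ := exists_odd' I h
  exact ⟨j, by rw [countP_sort]; exact hj⟩

lemma mulLeft_neg' (X : Cl) : LinearMap.mulLeft ℝ (-X) = -(LinearMap.mulLeft ℝ X) := by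
  ext y; simp

lemma trace_mulLeft_eI {I : Finset (Fin 4)} (h : I ≠ ∅) :
    LinearMap.trace ℝ Cl (LinearMap.mulLeft ℝ (eI I)) = 0 := by
  obtain ⟨j, hj⟩ := exists_odd I h
  set u := ι η (e j) with hu
  set X := eI I with hX
  have hodd : Odd ((Finset.sort I (· ≤ ·)).countP (fun i => i != j)) := Nat.odd_iff.mpr hj
  have hux : u * X = -(X * u) := by
    have h2 := prod_anticomm j (Finset.sort I (· ≤ ·))
    rw [hodd.neg_one_pow] at h2
    simpa [hX, eI, neg_smul, one_smul] using h2
  set c := η (e j) with hc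
  have hcne : c ≠ 0 := eta_e_ne j
  have huu : u * u = algebraMap ℝ Cl c := ι_sq_scalar η (e j)
  have key : (c⁻¹ • u) * (u * X) = X := by
    rw [smul_mul_assoc, ← mul_assoc, huu, ← Algebra.smul_def, smul_smul,
      inv_mul_cancel₀ hcne, one_smul]
  have h3 : (u * X) * (c⁻¹ • u) = -X := by
    rw [hux, neg_mul, mul_smul_comm, mul_assoc, huu, ← Algebra.commutes, ← Algebra.smul_def,
      smul_smul, inv_mul_cancel₀ hcne, one_smul]
  have h2 : LinearMap.trace ℝ Cl (LinearMap.mulLeft ℝ ((u * X) * (c⁻¹ • u)))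
      = LinearMap.trace ℝ Cl (LinearMap.mulLeft ℝ X) := by
    rw [LinearMap.mulLeft_mul, ← Module.End.mul_eq_comp, LinearMap.trace_mul_comm,
      Module.End.mul_eq_comp, ← LinearMap.mulLeft_mul, key]
  rw [h3, mulLeft_neg', map_neg] at h2
  linarith

lemma coord_eq_trace (b : Module.Basis (Finset (Fin 4)) ℝ Cl) (hb : ∀ I, b I = eI I) (x : Cl) :
    (16:ℝ) * b.coord ∅ x = LinearMap.trace ℝ Cl (LinearMap.mulLeft ℝ x) := by
  haveI := Module.Finite.of_basis b
  haveI := Module.Free.of_basis b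
  have hmul : ∀ y : Cl, LinearMap.mul ℝ Cl y = LinearMap.mulLeft ℝ y := fun y => rfl
  have key : ((16:ℝ) • b.coord ∅ : Cl →ₗ[ℝ] ℝ)
      = (LinearMap.trace ℝ Cl) ∘ₗ (LinearMap.mul ℝ Cl) := by
    apply b.ext
    intro I
    rw [LinearMap.smul_apply, LinearMap.comp_apply, hmul]
    by_cases hI : I = ∅
    · subst hI
      have h1 : b (∅ : Finset (Fin 4)) = 1 := by rw [hb]; simp [eI]
      rw [h1, LinearMap.mulLeft_one, LinearMap.trace_id, Module.finrank_eq_card_basis b,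
        Fintype.card_finset]
      have : b.coord ∅ 1 = 1 := by
        rw [← h1, Module.Basis.coord_apply, Module.Basis.repr_self, Finsupp.single_eq_same]
      rw [this]
      norm_num
    · rw [hb, trace_mulLeft_eI hI, ← hb, Module.Basis.coord_apply, Module.Basis.repr_self,
        Finsupp.single_apply, if_neg hI]
      simp
  have := congrArg (fun L : Cl →ₗ[ℝ] ℝ => L x) key
  simpa [hmul] using this

lemma hat_ι (f : V4 ≃ₗ[ℝ] V4) (hf : ∀ v, η (f v) = η v) (v : V4) :
    hatAut f hf (ι η v) = ι η (f v) := by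
  rw [hatAut, lift_ι_apply]; rfl

lemma hat_hat (f g : V4 ≃ₗ[ℝ] V4) (hf : ∀ v, η (f v) = η v) (hg : ∀ v, η (g v) = η v)
    (h : ∀ v, f (g v) = v) (x : Cl) : hatAut f hf (hatAut g hg x) = x := by
  have key : (hatAut f hf).comp (hatAut g hg) = AlgHom.id ℝ Cl := by
    apply CliffordAlgebra.hom_ext
    apply LinearMap.ext; intro v
    simp [hat_ι, h v]
  have := DFunLike.congr_fun key x
  simpa using this

lemma cconj_algebraMap (r : ℝ) : cconj (algebraMap ℝ Cl r) = algebraMap ℝ Cl r := by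
  simp [cconj]

lemma cconj_ι (v : V4) : cconj (ι η v) = -(ι η v) := by
  simp [cconj]

lemma cconj_mul (x y : Cl) : cconj (x * y) = cconj y * cconj x := by
  simp only [cconj, LinearMap.comp_apply, AlgHom.toLinearMap_apply, map_mul]
  exact reverse.map_mul _ _

lemma cconj_hat (f : V4 ≃ₗ[ℝ] V4) (hf : ∀ v, η (f v) = η v) (x : Cl) :
    cconj (hatAut f hf x) = hatAut f hf (cconj x) := by
  induction x using CliffordAlgebra.induction with
  | algebraMap r => simp only [AlgHom.commutes, cconj_algebraMap]
  | ι v => rw [hat_ι, cconj_ι, cconj_ι, map_neg, hat_ι]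
  | mul x y hx hy => rw [map_mul, cconj_mul, cconj_mul, map_mul, hx, hy]
  | add x y hx hy => simp only [map_add, hx, hy]

lemma coord_hat (b : Module.Basis (Finset (Fin 4)) ℝ Cl) (hb : ∀ I, b I = eI I)
    (f : V4 ≃ₗ[ℝ] V4) (hf : ∀ v, η (f v) = η v) (x : Cl) :
    b.coord ∅ (hatAut f hf x) = b.coord ∅ x := by
  set F := (hatAut f hf).toLinearMap with hF
  set G := (hatAut f.symm (isometry_symm f hf)).toLinearMap with hG
  have hFG : ∀ y : Cl, hatAut f hf (hatAut f.symm (isometry_symm f hf) y) = y :=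
    hat_hat f f.symm hf (isometry_symm f hf) (fun v => f.apply_symm_apply v)
  have hGF : ∀ y : Cl, hatAut f.symm (isometry_symm f hf) (hatAut f hf y) = y :=
    hat_hat f.symm f (isometry_symm f hf) hf (fun v => f.symm_apply_apply v)
  have hm : LinearMap.mulLeft ℝ (hatAut f hf x)
      = (F * LinearMap.mulLeft ℝ x) * G := by
    ext y
    simp only [LinearMap.mulLeft_apply, Module.End.mul_apply, Module.End.mul_eq_comp,
      LinearMap.comp_apply, hF, hG, AlgHom.toLinearMap_apply]
    conv_rhs => rw [map_mul, hFG y]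
  have hGFone : G * F = 1 := by
    ext y
    simp only [Module.End.mul_apply, Module.End.one_apply, hF, hG, AlgHom.toLinearMap_apply]
    exact hGF y
  have h1 := coord_eq_trace b hb (hatAut f hf x)
  have h2 := coord_eq_trace b hb x
  rw [hm, LinearMap.trace_mul_comm, ← mul_assoc, hGFone, one_mul] at h1
  have : (16:ℝ) * b.coord ∅ (hatAut f hf x) = (16:ℝ) * b.coord ∅ x := by
    rw [h1, h2]
  linarith

lemma ghat_hat (b : Module.Basis (Finset (Fin 4)) ℝ Cl) (hb : ∀ I, b I = eI I)
    (f : V4 ≃ₗ[ℝ] V4) (hf : ∀ v, η (f v) = η v) (ψ φ : Cl) :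
    ghat (b.coord ∅) (hatAut f hf ψ) (hatAut f hf φ) = ghat (b.coord ∅) ψ φ := by
  unfold ghat
  rw [cconj_hat, cconj_hat, ← map_mul, ← map_mul, ← map_add, coord_hat b hb]

lemma ghat_add_left (π₀ : Cl →ₗ[ℝ] ℝ) (x y φ : Cl) :
    ghat π₀ (x + y) φ = ghat π₀ x φ + ghat π₀ y φ := by
  simp only [ghat, map_add, add_mul, mul_add]
  ring

lemma ghat_smul_left (π₀ : Cl →ₗ[ℝ] ℝ) (c : ℝ) (x φ : Cl) :
    ghat π₀ (c • x) φ = c * ghat π₀ x φ := by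
  simp only [ghat, map_smul, smul_mul_assoc, mul_smul_comm, ← smul_add, map_smul,
    smul_eq_mul]
  ring

lemma ghat_comm (π₀ : Cl →ₗ[ℝ] ℝ) (ψ φ : Cl) : ghat π₀ ψ φ = ghat π₀ φ ψ := by
  simp only [ghat, add_comm]

lemma ghat_sum_left (π₀ : Cl →ₗ[ℝ] ℝ) (g : Fin 4 → Cl) (φ : Cl) :
    ghat π₀ (∑ β : Fin 4, g β) φ = ∑ β : Fin 4, ghat π₀ (g β) φ := by
  rw [Fin.sum_univ_four, Fin.sum_univ_four, ghat_add_left, ghat_add_left, ghat_add_left]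


/-- the action of a linear isometry sends force tensors to force tensors. -/
theorem stmt9 (b : Module.Basis (Finset (Fin 4)) ℝ Cl) (hb : ∀ I, b I = eI I)
    (θ : Fin 4 → Module.End ℝ Cl) (hθ : IsForceTensor (b.coord ∅) θ)
    (f : V4 ≃ₗ[ℝ] V4) (hf : ∀ v, η (f v) = η v) :
    IsForceTensor (b.coord ∅) (act f hf θ) := by
  intro α
  have hFG : ∀ y : Cl, hatAut f hf (hatAut f.symm (isometry_symm f hf) y) = y :=
    hat_hat f f.symm hf (isometry_symm f hf) (fun v => f.apply_symm_apply v)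
  constructor
  · intro v
    apply LinearMap.ext; intro x
    simp only [act, LinearMap.sum_apply, LinearMap.smul_apply, LinearMap.comp_apply,
      AlgHom.toLinearMap_apply, γ, LinearMap.mulLeft_apply]
    rw [Finset.mul_sum]
    refine Finset.sum_congr rfl fun β _ => ?_
    rw [map_mul, hat_ι]
    have hcomm := LinearMap.congr_fun ((hθ β).1 (f.symm v))
      ((hatAut f.symm (isometry_symm f hf)) x)
    simp only [LinearMap.comp_apply, γ, LinearMap.mulLeft_apply] at hcomm
    rw [hcomm, map_mul, hat_ι, f.apply_symm_apply]
    exact (mul_smul_comm _ _ _).symm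
  · intro ψ φ
    set π₀ := b.coord ∅ with hπ
    set G := hatAut f.symm (isometry_symm f hf) with hGdef
    set F := hatAut f hf with hFdef
    have happ : ∀ χ : Cl, (act f hf θ α) χ
        = ∑ β : Fin 4, f.symm (e α) β • (F ((θ β) (G χ))) := by
      intro χ
      simp [act, LinearMap.sum_apply, LinearMap.smul_apply, LinearMap.comp_apply,
        AlgHom.toLinearMap_apply]
      rfl
    have key : ∀ β : Fin 4, ghat π₀ (F ((θ β) (G ψ))) φ + ghat π₀ (F ((θ β) (G φ))) ψ = 0 := by
      intro β
      have h1 : ghat π₀ (F ((θ β) (G ψ))) (F (G φ)) = ghat π₀ ((θ β) (G ψ)) (G φ) :=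
        ghat_hat b hb f hf _ _
      have h2 : ghat π₀ (F ((θ β) (G φ))) (F (G ψ)) = ghat π₀ ((θ β) (G φ)) (G ψ) :=
        ghat_hat b hb f hf _ _
      rw [hFG φ] at h1
      rw [hFG ψ] at h2
      rw [h1, h2, ghat_comm π₀ ((θ β) (G φ))]
      exact (hθ β).2 (G ψ) (G φ)
    rw [happ ψ, happ φ, ghat_comm π₀ ψ, ghat_sum_left, ghat_sum_left,
      ← Finset.sum_add_distrib]
    apply Finset.sum_eq_zero; intro β _
    rw [ghat_smul_left, ghat_smul_left, ← mul_add, key β, mul_zero]
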